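/- Under the hypotheses of the main theorem, the steady state ȳ(σ) = H(σ)y₀ of the Friedkin–Johnsen model satisfies a quasi-consensus: for any two components i, j there exist M, σ̄ > 0 such that |ȳᵢ(σ) − ȳⱼ(σ)| ≤ M σ for all σ ∈ (0, σ̄]. -/

import Mathlib

open Matrix

def MatIrreducible {n : ℕ} (W : Matrix (Fin n) (Fin n) ℝ) : Prop :=
  ∀ i j, ∃ k : ℕ, 0 < (W ^ k) i j

namespace FJaux

variable {n : ℕ}

lemma pow_nn (W : Matrix (Fin n) (Fin n) ℝ) (hWnn : ∀ i j, 0 ≤ W i j) :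
    ∀ k i j, 0 ≤ (W ^ k) i j := by
  intro k
  induction k with
  | zero =>
    intro i j
    simp only [pow_zero, Matrix.one_apply]
    split_ifs <;> norm_num
  | succ k ih =>
    intro i j
    rw [pow_succ, Matrix.mul_apply]
    exact Finset.sum_nonneg fun l _ => mul_nonneg (ih i l) (hWnn l j)

lemma pow_rs (W : Matrix (Fin n) (Fin n) ℝ) (hWrs : ∀ i, ∑ j, W i j = 1) :
    ∀ k i, ∑ j, (W ^ k) i j = 1 := by
  intro k
  induction k with
  | zero =>
    intro i
    simp [Matrix.one_apply]
  | succ k ih =>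
    intro i
    simp only [pow_succ, Matrix.mul_apply]
    rw [Finset.sum_comm]
    calc ∑ l, ∑ j, (W ^ k) i l * W l j
        = ∑ l, (W ^ k) i l * ∑ j, W l j := by
          simp [Finset.mul_sum]
      _ = 1 := by simp [hWrs, ih i]

lemma pow_fix (W : Matrix (Fin n) (Fin n) ℝ) (z : Fin n → ℝ) (hz : W *ᵥ z = z) :
    ∀ k, (W ^ k) *ᵥ z = z := by
  intro k
  induction k with
  | zero => simp
  | succ k ih =>
    rw [pow_succ, ← Matrix.mulVec_mulVec, hz, ih]

lemma fixed_const (W : Matrix (Fin n) (Fin n) ℝ)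
    (hWnn : ∀ i j, 0 ≤ W i j) (hWrs : ∀ i, ∑ j, W i j = 1)
    (hWirr : MatIrreducible W) (z : Fin n → ℝ) (hz : W *ᵥ z = z)
    (a b : Fin n) : z a = z b := by
  obtain ⟨m, -, hm⟩ := Finset.exists_max_image Finset.univ z ⟨a, Finset.mem_univ a⟩
  have key : ∀ c : Fin n, z c = z m := by
    intro c
    obtain ⟨k, hk⟩ := hWirr m c
    have hsum : ∑ l, (W ^ k) m l * (z m - z l) = 0 := by
      have h1 : ((W ^ k) *ᵥ z) m = z m := by rw [pow_fix W z hz k]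
      have h2 : ∑ l, (W ^ k) m l * z l = z m := h1
      calc ∑ l, (W ^ k) m l * (z m - z l)
          = (∑ l, (W ^ k) m l) * z m - ∑ l, (W ^ k) m l * z l := by
            rw [Finset.sum_mul]
            rw [← Finset.sum_sub_distrib]
            congr 1; ext l; ring
        _ = 0 := by rw [pow_rs W hWrs k m, h2]; ring
    have hnn : ∀ l ∈ Finset.univ, 0 ≤ (W ^ k) m l * (z m - z l) := by
      intro l _
      exact mul_nonneg (pow_nn W hWnn k m l) (sub_nonneg.mpr (hm l (Finset.mem_univ l)))
    have := (Finset.sum_eq_zero_iff_of_nonneg hnn).mp hsum c (Finset.mem_univ c)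
    rcases mul_eq_zero.mp this with h | h
    · exact absurd h (ne_of_gt hk)
    · linarith [sub_eq_zero.mp h]
  rw [key a, key b]

lemma mulVec_continuous (W : Matrix (Fin n) (Fin n) ℝ) :
    Continuous fun z : Fin n → ℝ => W *ᵥ z := by
  apply continuous_pi
  intro i
  simp only [Matrix.mulVec, dotProduct]
  exact continuous_finset_sum _ fun j _ => continuous_const.mul (continuous_apply j)

/-- Key compactness lemma: oscillation is controlled by ‖z - Wz‖. -/
lemma osc_bound (W : Matrix (Fin n) (Fin n) ℝ)
    (hWnn : ∀ i j, 0 ≤ W i j) (hWrs : ∀ i, ∑ j, W i j = 1)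
    (hWirr : MatIrreducible W) (i j : Fin n) (hij : i ≠ j) :
    ∃ K > (0 : ℝ), ∀ z : Fin n → ℝ, |z i - z j| ≤ K * ‖z - W *ᵥ z‖ := by
  set C : Set (Fin n → ℝ) :=
    {z | (∀ k, z k ∈ Set.Icc (0:ℝ) 1) ∧ (∃ a, z a = 0) ∧ (∃ a, z a = 1)} with hC
  have hCcompact : IsCompact C := by
    have h1 : IsCompact (Set.pi Set.univ fun _ : Fin n => Set.Icc (0:ℝ) 1) :=
      isCompact_univ_pi fun _ => isCompact_Icc
    have h2 : IsClosed {z : Fin n → ℝ | ∃ a, z a = 0} := by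
      have : {z : Fin n → ℝ | ∃ a, z a = 0} = ⋃ a, {z : Fin n → ℝ | z a = 0} := by
        ext z; simp
      rw [this]
      exact isClosed_iUnion_of_finite fun a => isClosed_eq (continuous_apply a) continuous_const
    have h3 : IsClosed {z : Fin n → ℝ | ∃ a, z a = 1} := by
      have : {z : Fin n → ℝ | ∃ a, z a = 1} = ⋃ a, {z : Fin n → ℝ | z a = 1} := by
        ext z; simp
      rw [this]
      exact isClosed_iUnion_of_finite fun a => isClosed_eq (continuous_apply a) continuous_const
    have : C = (Set.pi Set.univ fun _ : Fin n => Set.Icc (0:ℝ) 1) ∩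
        ({z : Fin n → ℝ | ∃ a, z a = 0} ∩ {z : Fin n → ℝ | ∃ a, z a = 1}) := by
      ext z
      constructor
      · rintro ⟨h1, h2, h3⟩
        exact ⟨fun k _ => h1 k, h2, h3⟩
      · rintro ⟨h1, h2, h3⟩
        exact ⟨fun k => h1 k (Set.mem_univ k), h2, h3⟩
    rw [this]
    exact h1.inter_right (h2.inter h3)
  have hCne : C.Nonempty := by
    refine ⟨fun k => if k = i then 1 else 0, fun k => ?_, ⟨j, ?_⟩, ⟨i, ?_⟩⟩
    · simp only
      split_ifs <;> norm_num
    · simp [Ne.symm hij]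
    · simp
  have hFcont : Continuous fun z : Fin n → ℝ => ‖z - W *ᵥ z‖ :=
    (continuous_id.sub (mulVec_continuous W)).norm
  obtain ⟨z₀, hz₀C, hz₀min⟩ := hCcompact.exists_isMinOn hCne hFcont.continuousOn
  set m : ℝ := ‖z₀ - W *ᵥ z₀‖ with hm
  have hmpos : 0 < m := by
    rcases eq_or_lt_of_le (norm_nonneg (z₀ - W *ᵥ z₀)) with h | h
    · exfalso
      have hz : W *ᵥ z₀ = z₀ := by
        have : z₀ - W *ᵥ z₀ = 0 := by
          rw [← norm_eq_zero]; exact h.symm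
        have := sub_eq_zero.mp this
        exact this.symm
      obtain ⟨a0, ha0⟩ := hz₀C.2.1
      obtain ⟨a1, ha1⟩ := hz₀C.2.2
      have := fixed_const W hWnn hWrs hWirr z₀ hz a0 a1
      rw [ha0, ha1] at this
      norm_num at this
    · exact h
  refine ⟨m⁻¹, inv_pos.mpr hmpos, fun z => ?_⟩
  obtain ⟨mx, -, hmx⟩ := Finset.exists_max_image Finset.univ z ⟨i, Finset.mem_univ i⟩
  obtain ⟨mn, -, hmn⟩ := Finset.exists_min_image Finset.univ z ⟨i, Finset.mem_univ i⟩
  set r : ℝ := z mx - z mn with hr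
  have hr0 : 0 ≤ r := sub_nonneg.mpr (hmn mx (Finset.mem_univ mx))
  have habs : |z i - z j| ≤ r := by
    rw [abs_sub_le_iff]
    constructor
    · have := hmx i (Finset.mem_univ i); have := hmn j (Finset.mem_univ j); linarith
    · have := hmx j (Finset.mem_univ j); have := hmn i (Finset.mem_univ i); linarith
  rcases eq_or_lt_of_le hr0 with hr0' | hrpos
  · have : |z i - z j| ≤ 0 := by rw [← hr0'] at habs; exact habs
    have h2 : 0 ≤ m⁻¹ * ‖z - W *ᵥ z‖ :=
      mul_nonneg (le_of_lt (inv_pos.mpr hmpos)) (norm_nonneg _)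
    linarith
  · set z' : Fin n → ℝ := fun k => (z k - z mn) / r with hz'
    have hz'C : z' ∈ C := by
      refine ⟨fun k => ⟨?_, ?_⟩, ⟨mn, ?_⟩, ⟨mx, ?_⟩⟩
      · exact div_nonneg (sub_nonneg.mpr (hmn k (Finset.mem_univ k))) hr0
      · rw [div_le_one hrpos]
        have := hmx k (Finset.mem_univ k); linarith
      · simp [hz']
      · simp [hz']
        field_simp
        exact hr.symm
    have hWz' : z' - W *ᵥ z' = r⁻¹ • (z - W *ᵥ z) := by
      funext k
      have hWrow : (W *ᵥ z') k = ((W *ᵥ z) k - z mn) / r := by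
        have e1 : ∑ l, W k l * z mn = z mn := by rw [← Finset.sum_mul, hWrs k, one_mul]
        have e2 : (W *ᵥ z) k = ∑ l, W k l * z l := rfl
        have e3 : (W *ᵥ z') k = ∑ l, (W k l * z l - W k l * z mn) / r := by
          simp only [Matrix.mulVec, dotProduct, hz']
          apply Finset.sum_congr rfl
          intro l _
          rw [← mul_sub, mul_div_assoc]
        rw [e3, ← Finset.sum_div, Finset.sum_sub_distrib, e1, e2]
      rw [Pi.sub_apply, hWrow]
      simp only [Pi.sub_apply, Pi.smul_apply, smul_eq_mul, hz', hWrow]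
      field_simp
      ring
    have hmin : m ≤ ‖z' - W *ᵥ z'‖ := hz₀min hz'C
    rw [hWz', norm_smul] at hmin
    have : m * r ≤ ‖z - W *ᵥ z‖ := by
      have hinv : ‖r⁻¹‖ = r⁻¹ := by
        rw [Real.norm_eq_abs, abs_of_pos (inv_pos.mpr hrpos)]
      rw [hinv] at hmin
      calc m * r ≤ (r⁻¹ * ‖z - W *ᵥ z‖) * r := by
            apply mul_le_mul_of_nonneg_right hmin hr0
        _ = ‖z - W *ᵥ z‖ := by field_simp
    calc |z i - z j| ≤ r := habs
      _ ≤ m⁻¹ * ‖z - W *ᵥ z‖ := by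
          have hN : m * (m⁻¹ * ‖z - W *ᵥ z‖) = ‖z - W *ᵥ z‖ := by field_simp
          nlinarith [this]

end FJaux

theorem stmt11 {n : ℕ} (W : Matrix (Fin n) (Fin n) ℝ) (p : Fin n → ℝ)
    (y₀ : Fin n → ℝ)
    (hWnn : ∀ i j, 0 ≤ W i j) (hWrs : ∀ i, ∑ j, W i j = 1)
    (hWirr : MatIrreducible W) (hp : ∀ i, 0 < p i ∧ p i ≤ 1) :
    ∀ i j : Fin n, ∃ M > (0 : ℝ), ∃ σbar > (0 : ℝ), ∀ σ : ℝ, 0 < σ → σ ≤ σbar →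
      |((σ • (1 - (1 - σ • Matrix.diagonal p) * W)⁻¹ * Matrix.diagonal p) *ᵥ y₀) i
        - ((σ • (1 - (1 - σ • Matrix.diagonal p) * W)⁻¹ * Matrix.diagonal p) *ᵥ y₀) j|
        ≤ M * σ := by
  intro i j
  by_cases hij : i = j
  · subst hij
    exact ⟨1, one_pos, 1, one_pos, fun σ hσ hσ1 => by simpa using le_of_lt hσ⟩
  obtain ⟨K, hK, hosc⟩ := FJaux.osc_bound W hWnn hWrs hWirr i j hij
  set Y : ℝ := ∑ k, |y₀ k| with hY
  have hYnn : 0 ≤ Y := Finset.sum_nonneg fun k _ => abs_nonneg _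
  have hy₀Y : ∀ k, |y₀ k| ≤ Y :=
    fun k => Finset.single_le_sum (fun l _ => abs_nonneg (y₀ l)) (Finset.mem_univ k)
  refine ⟨2 * K * Y + 1, by positivity, 1, one_pos, fun σ hσ hσ1 => ?_⟩
  set D : Matrix (Fin n) (Fin n) ℝ := Matrix.diagonal p with hD
  set A : Matrix (Fin n) (Fin n) ℝ := 1 - (1 - σ • D) * W with hA
  -- Componentwise action of A
  have hAmv : ∀ v : Fin n → ℝ, ∀ k, (A *ᵥ v) k = v k - (1 - σ * p k) * (W *ᵥ v) k := by
    intro v k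
    rw [hA, Matrix.sub_mulVec, Matrix.one_mulVec, ← Matrix.mulVec_mulVec,
      Matrix.sub_mulVec, Matrix.one_mulVec, Matrix.smul_mulVec]
    simp only [hD, Pi.sub_apply, Pi.smul_apply, smul_eq_mul, Matrix.mulVec_diagonal]
    ring
  -- A is invertible
  have hdet : A.det ≠ 0 := by
    intro hdet0
    obtain ⟨v, hv0, hv⟩ := (Matrix.exists_mulVec_eq_zero_iff).mpr hdet0
    obtain ⟨m, -, hm⟩ := Finset.exists_max_image Finset.univ (fun k => |v k|)
      ⟨i, Finset.mem_univ i⟩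
    have hvm0 : |v m| ≠ 0 := by
      intro h
      apply hv0
      funext k
      have := hm k (Finset.mem_univ k)
      have : |v k| ≤ 0 := by rw [h] at this; exact this
      have := abs_nonneg (v k)
      simpa using abs_eq_zero.mp (le_antisymm ‹|v k| ≤ 0› ‹0 ≤ |v k|›)
    have hvmpos : 0 < |v m| := lt_of_le_of_ne (abs_nonneg _) (Ne.symm hvm0)
    have h1 : v m = (1 - σ * p m) * (W *ᵥ v) m := by
      have := congrFun hv m
      have h2 := hAmv v m
      simp only [Pi.zero_apply] at this
      rw [this] at h2
      linarith [h2]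
    have hσp : 0 < σ * p m := mul_pos hσ (hp m).1
    have hσp1 : σ * p m ≤ 1 := by
      calc σ * p m ≤ 1 * p m := mul_le_mul_of_nonneg_right hσ1 (le_of_lt (hp m).1)
        _ ≤ 1 := by rw [one_mul]; exact (hp m).2
    have hWv : |(W *ᵥ v) m| ≤ |v m| := by
      calc |(W *ᵥ v) m| = |∑ l, W m l * v l| := rfl
        _ ≤ ∑ l, |W m l * v l| := Finset.abs_sum_le_sum_abs _ _
        _ ≤ ∑ l, W m l * |v m| := by
            apply Finset.sum_le_sum
            intro l _
            rw [abs_mul, abs_of_nonneg (hWnn m l)]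
            exact mul_le_mul_of_nonneg_left (hm l (Finset.mem_univ l)) (hWnn m l)
        _ = |v m| := by rw [← Finset.sum_mul, hWrs m, one_mul]
    have : |v m| ≤ (1 - σ * p m) * |v m| := by
      calc |v m| = |(1 - σ * p m) * (W *ᵥ v) m| := by rw [← h1]
        _ = (1 - σ * p m) * |(W *ᵥ v) m| := by
            rw [abs_mul, abs_of_nonneg (by linarith : (0:ℝ) ≤ 1 - σ * p m)]
        _ ≤ (1 - σ * p m) * |v m| :=
            mul_le_mul_of_nonneg_left hWv (by linarith)
    nlinarith
  have hunit : IsUnit A.det := isUnit_iff_ne_zero.mpr hdet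
  set x : Fin n → ℝ := ((σ • A⁻¹ * D) *ᵥ y₀) with hx
  -- fixed point equation: A *ᵥ x = σ • (D *ᵥ y₀)
  have hfix : A *ᵥ x = σ • (D *ᵥ y₀) := by
    rw [hx, Matrix.mulVec_mulVec]
    have : A * (σ • A⁻¹ * D) = σ • D := by
      rw [Matrix.smul_mul, Matrix.mul_smul, ← mul_assoc,
        Matrix.mul_nonsing_inv A hunit, one_mul]
    rw [this, Matrix.smul_mulVec]
  have hcomp : ∀ k, x k = (1 - σ * p k) * (W *ᵥ x) k + σ * p k * y₀ k := by
    intro k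
    have h1 := congrFun hfix k
    rw [hAmv x k] at h1
    simp only [hD, Pi.smul_apply, smul_eq_mul, Matrix.mulVec_diagonal] at h1
    linarith
  -- bound |x k| ≤ Y
  have hxY : ∀ k, |x k| ≤ Y := by
    obtain ⟨m, -, hm⟩ := Finset.exists_max_image Finset.univ (fun k => |x k|)
      ⟨i, Finset.mem_univ i⟩
    have hσp : 0 < σ * p m := mul_pos hσ (hp m).1
    have hσp1 : σ * p m ≤ 1 := by
      calc σ * p m ≤ 1 * p m := mul_le_mul_of_nonneg_right hσ1 (le_of_lt (hp m).1)
        _ ≤ 1 := by rw [one_mul]; exact (hp m).2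
    have hWx : |(W *ᵥ x) m| ≤ |x m| := by
      calc |(W *ᵥ x) m| = |∑ l, W m l * x l| := rfl
        _ ≤ ∑ l, |W m l * x l| := Finset.abs_sum_le_sum_abs _ _
        _ ≤ ∑ l, W m l * |x m| := by
            apply Finset.sum_le_sum
            intro l _
            rw [abs_mul, abs_of_nonneg (hWnn m l)]
            exact mul_le_mul_of_nonneg_left (hm l (Finset.mem_univ l)) (hWnn m l)
        _ = |x m| := by rw [← Finset.sum_mul, hWrs m, one_mul]
    have hxm : |x m| ≤ Y := by
      have h1 : |x m| ≤ (1 - σ * p m) * |x m| + σ * p m * Y := by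
        calc |x m| = |(1 - σ * p m) * (W *ᵥ x) m + σ * p m * y₀ m| := by rw [← hcomp m]
          _ ≤ |(1 - σ * p m) * (W *ᵥ x) m| + |σ * p m * y₀ m| := abs_add_le _ _
          _ ≤ (1 - σ * p m) * |x m| + σ * p m * Y := by
              rw [abs_mul, abs_mul, abs_of_nonneg (by linarith : (0:ℝ) ≤ 1 - σ * p m),
                abs_of_nonneg (le_of_lt hσp)]
              have := hy₀Y m
              have h3 : (1 - σ * p m) * |(W *ᵥ x) m| ≤ (1 - σ * p m) * |x m| :=
                mul_le_mul_of_nonneg_left hWx (by linarith)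
              nlinarith
      nlinarith
    intro k
    exact le_trans (hm k (Finset.mem_univ k)) hxm
  -- bound on x - Wx componentwise
  have hxWx : ∀ k, |x k - (W *ᵥ x) k| ≤ σ * (2 * Y) := by
    intro k
    have hWxk : |(W *ᵥ x) k| ≤ Y := by
      calc |(W *ᵥ x) k| = |∑ l, W k l * x l| := rfl
        _ ≤ ∑ l, |W k l * x l| := Finset.abs_sum_le_sum_abs _ _
        _ ≤ ∑ l, W k l * Y := by
            apply Finset.sum_le_sum
            intro l _
            rw [abs_mul, abs_of_nonneg (hWnn k l)]
            exact mul_le_mul_of_nonneg_left (hxY l) (hWnn k l)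
        _ = Y := by rw [← Finset.sum_mul, hWrs k, one_mul]
    have h1 : x k - (W *ᵥ x) k = σ * p k * (y₀ k - (W *ᵥ x) k) := by
      rw [hcomp k]; ring
    rw [h1, abs_mul, abs_of_nonneg (le_of_lt (mul_pos hσ (hp k).1))]
    have h2 : |y₀ k - (W *ᵥ x) k| ≤ 2 * Y := by
      calc |y₀ k - (W *ᵥ x) k| ≤ |y₀ k| + |(W *ᵥ x) k| := abs_sub _ _
        _ ≤ Y + Y := add_le_add (hy₀Y k) hWxk
        _ = 2 * Y := by ring
    calc σ * p k * |y₀ k - (W *ᵥ x) k| ≤ σ * p k * (2 * Y) := by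
          apply mul_le_mul_of_nonneg_left h2 (le_of_lt (mul_pos hσ (hp k).1))
      _ ≤ σ * 1 * (2 * Y) := by
          have h3 : σ * p k ≤ σ * 1 := mul_le_mul_of_nonneg_left (hp k).2 hσ.le
          exact mul_le_mul_of_nonneg_right h3 (by positivity)
      _ = σ * (2 * Y) := by ring
  have hnorm : ‖x - W *ᵥ x‖ ≤ σ * (2 * Y) := by
    rw [pi_norm_le_iff_of_nonneg (by positivity)]
    intro k
    simpa [Real.norm_eq_abs] using hxWx k
  calc |x i - x j| ≤ K * ‖x - W *ᵥ x‖ := hosc x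
    _ ≤ K * (σ * (2 * Y)) := mul_le_mul_of_nonneg_left hnorm (le_of_lt hK)
    _ = 2 * K * Y * σ := by ring
    _ ≤ (2 * K * Y + 1) * σ := by nlinarith
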